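/- arXiv:1411.6512 — 4 statements merged into one kernel-verified Lean document; each statement's English description precedes it below -/
import Mathlib

section
/- Let K_1,...,K_L and K'_1,...,K'_L be symmetric positive definite matrices with K_l, K'_l of size m_l×m_l, each satisfying the normalization (K_l)_{11} = (K'_l)_{11} = 1 for l = 2,...,L. If K_L ⊗ ... ⊗ K_1 = K'_L ⊗ ... ⊗ K'_1, then K_l = K'_l for all l = 1,...,L. -/
open Matrix Real


lemma posdef_diag {n : Type*} [Fintype n] [DecidableEq n] {M : Matrix n n ℝ} (hM : M.PosDef)
    (i : n) : 0 < M i i := by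
  exact hM.diag_pos

noncomputable section

/-- The `L`-fold Kronecker product `K_L ⊗ ... ⊗ K_1`, realized as a matrix indexed by
multi-indices: its `(i,j)` entry is `∏ l, K l (i l) (j l)`. -/
def kron (L : ℕ) (m : Fin L → ℕ) (K : ∀ l, Matrix (Fin (m l)) (Fin (m l)) ℝ) :
    Matrix (∀ l, Fin (m l)) (∀ l, Fin (m l)) ℝ :=
  fun i j => ∏ l, K l (i l) (j l)

/-- Identifiability of the factors of a separable (Kronecker-product) precision matrix under
the normalization `(K_l)_{11} = 1` for all `l` other than the first: if
`K_L ⊗ ... ⊗ K_1 = K'_L ⊗ ... ⊗ K'_1` with all factors symmetric positive definite and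
normalized, then `K_l = K'_l` for every `l`. -/
theorem stmt8 (L : ℕ) (m : Fin L → ℕ) (hm : ∀ l, 0 < m l)
    (K K' : ∀ l, Matrix (Fin (m l)) (Fin (m l)) ℝ)
    (hK : ∀ l, (K l).PosDef) (hK' : ∀ l, (K' l).PosDef)
    (hnorm : ∀ l : Fin L, (l : ℕ) ≠ 0 → K l ⟨0, hm l⟩ ⟨0, hm l⟩ = 1)
    (hnorm' : ∀ l : Fin L, (l : ℕ) ≠ 0 → K' l ⟨0, hm l⟩ ⟨0, hm l⟩ = 1)
    (heq : kron L m K = kron L m K') :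
    ∀ l, K l = K' l := by
  intro l
  have hL : 0 < L := l.pos
  set z : ∀ k, Fin (m k) := fun k => ⟨0, hm k⟩ with hz
  set l0 : Fin L := ⟨0, hL⟩ with hl0
  have hc : ∀ k, 0 < K k (z k) (z k) := fun k => posdef_diag (hK k) _
  have hc' : ∀ k, 0 < K' k (z k) (z k) := fun k => posdef_diag (hK' k) _
  -- diagonal entries at 0 agree
  have hdiag : ∀ k, K k (z k) (z k) = K' k (z k) (z k) := by
    have h0 : K l0 (z l0) (z l0) = K' l0 (z l0) (z l0) := by
      have h := congrFun (congrFun heq z) z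
      simp only [kron] at h
      rw [Fintype.prod_eq_mul_prod_compl l0, Fintype.prod_eq_mul_prod_compl l0] at h
      rw [Finset.prod_eq_one, Finset.prod_eq_one] at h
      · simpa using h
      · intro k hk
        simp only [Finset.mem_compl, Finset.mem_singleton] at hk
        exact hnorm' k (fun h0 => hk (Fin.ext h0))
      · intro k hk
        simp only [Finset.mem_compl, Finset.mem_singleton] at hk
        exact hnorm k (fun h0 => hk (Fin.ext h0))
    intro k
    by_cases hk0 : (k : ℕ) = 0
    · have : k = l0 := Fin.ext hk0
      rw [this]; exact h0
    · rw [hnorm k hk0, hnorm' k hk0]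
  ext i j
  have h := congrFun (congrFun heq (Function.update z l i)) (Function.update z l j)
  simp only [kron] at h
  rw [Fintype.prod_eq_mul_prod_compl l, Fintype.prod_eq_mul_prod_compl l] at h
  simp only [Function.update_self] at h
  have hrest : ∀ k ∈ ({l}ᶜ : Finset (Fin L)),
      K k (Function.update z l i k) (Function.update z l j k) = K k (z k) (z k) := by
    intro k hk
    simp only [Finset.mem_compl, Finset.mem_singleton] at hk
    rw [Function.update_of_ne hk, Function.update_of_ne hk]
  have hrest' : ∀ k ∈ ({l}ᶜ : Finset (Fin L)),
      K' k (Function.update z l i k) (Function.update z l j k) = K' k (z k) (z k) := by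
    intro k hk
    simp only [Finset.mem_compl, Finset.mem_singleton] at hk
    rw [Function.update_of_ne hk, Function.update_of_ne hk]
  rw [Finset.prod_congr rfl hrest, Finset.prod_congr rfl hrest'] at h
  have hprodeq : ∏ k ∈ ({l}ᶜ : Finset (Fin L)), K k (z k) (z k)
      = ∏ k ∈ ({l}ᶜ : Finset (Fin L)), K' k (z k) (z k) :=
    Finset.prod_congr rfl fun k _ => hdiag k
  rw [← hprodeq] at h
  have hpos : (0:ℝ) < ∏ k ∈ ({l}ᶜ : Finset (Fin L)), K k (z k) (z k) :=
    Finset.prod_pos fun k _ => hc k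
  exact mul_right_cancel₀ (ne_of_gt hpos) h
end
end

section
/- Let G = (V,E) be an undirected graph on V = {1,...,p} and K ∈ P_G with Cholesky decomposition K = φᵀφ where φ is upper triangular with positive diagonal. Then φ is uniquely determined by its entries indexed by the set ν(G) = {(i,i) : i ∈ V} ∪ {(i,j) : i < j, (i,j) ∈ E}: specifically, φ_{1j} = 0 for j ≥ 2 with (1,j) ∉ E, and φ_{ij} = -(1/φ_{ii}) ∑_{k=1}^{i-1} φ_{ki} φ_{kj} for 2 ≤ i < j with (i,j) ∉ E. -/
open Matrix Real

noncomputable section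

/-- Completion of the Cholesky factor with respect to a graph (Roverato 2002): let
`K ∈ P_G` (positive definite with zeros at non-edges of `G`) with Cholesky decomposition
`K = φᵀφ`, `φ` upper triangular with positive diagonal. Then the entries of `φ` outside
`ν(G) = {(i,i)} ∪ {(i,j) : i < j, (i,j) ∈ E}` are determined by the free entries:
`φ_{1j} = 0` for `j ≥ 2` with `(1,j) ∉ E`, and
`φ_{ij} = -(1/φ_{ii}) ∑_{k<i} φ_{ki} φ_{kj}` for `2 ≤ i < j` with `(i,j) ∉ E`. -/
theorem stmt9 (p : ℕ) (hp : 0 < p) (E : Fin p → Fin p → Prop)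
    (K φ : Matrix (Fin p) (Fin p) ℝ) (hK : K.PosDef)
    (hKG : ∀ i j, i ≠ j → ¬ E i j → K i j = 0)
    (hchol : K = φᵀ * φ)
    (hut : ∀ i j : Fin p, j < i → φ i j = 0)
    (hdiag : ∀ i, 0 < φ i i) :
    (∀ j : Fin p, (⟨0, hp⟩ : Fin p) < j → ¬ E ⟨0, hp⟩ j → φ ⟨0, hp⟩ j = 0) ∧
    (∀ i j : Fin p, (⟨0, hp⟩ : Fin p) < i → i < j → ¬ E i j →
      φ i j = -(1 / φ i i) * ∑ k ∈ Finset.univ.filter (· < i), φ k i * φ k j) := by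
  have hKsum : ∀ i j, K i j = ∑ k, φ k i * φ k j := by
    intro i j
    rw [hchol, Matrix.mul_apply]
    simp [Matrix.transpose_apply]
  have hsplit : ∀ i j : Fin p,
      (∑ k, φ k i * φ k j)
        = (∑ k ∈ Finset.univ.filter (· < i), φ k i * φ k j) + φ i i * φ i j := by
    intro i j
    rw [← Finset.sum_filter_add_sum_filter_not Finset.univ (· < i)]
    congr 1
    rw [Finset.sum_eq_single i]
    · intro b hb hbne
      simp only [Finset.mem_filter, Finset.mem_univ, true_and] at hb
      have : i < b := lt_of_le_of_ne (not_lt.mp hb) (Ne.symm hbne)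
      rw [hut b i this, zero_mul]
    · intro h
      simp at h
  constructor
  · intro j h0j hEj
    have hK0 := hKG ⟨0, hp⟩ j (ne_of_lt h0j) hEj
    rw [hKsum] at hK0
    rw [hsplit] at hK0
    have hempty : (Finset.univ.filter (· < (⟨0, hp⟩ : Fin p))) = ∅ := by
      ext k
      simp [Fin.not_lt_zero, Fin.lt_def]
    rw [hempty, Finset.sum_empty, zero_add] at hK0
    have := (hdiag ⟨0, hp⟩).ne'
    exact (mul_eq_zero.mp hK0).resolve_left this
  · intro i j h0i hij hEij
    have hK0 := hKG i j (ne_of_lt hij) hEij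
    rw [hKsum, hsplit] at hK0
    have hne := (hdiag i).ne'
    field_simp
    linarith
end
end

section
/- Let G have edges E and consider the map from K ∈ P_G to the free elements {φ_{ij} : (i,j) ∈ ν(G)} of its Cholesky factor K = φᵀφ. The Jacobian determinant of this change of variables is J(K → φ) = 2^p ∏_{i=1}^p φ_{ii}^{d_i^G + 1}, where d_i^G = |bd_G(i) ∩ {i+1,...,p}|. -/
open Matrix Real

noncomputable section

/-- The set `ν(G) = {(i,i) : i ∈ V} ∪ {(i,j) : i < j, (i,j) ∈ E}` of free Cholesky entries. -/
def nuG (p : ℕ) (E : Fin p → Fin p → Prop) [DecidableRel E] : Finset (Fin p × Fin p) :=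
  Finset.univ.filter (fun e => e.1 = e.2 ∨ (e.1 < e.2 ∧ E e.1 e.2))

/-- Jacobian of the change of variables from `K ∈ P_G` to the free elements
`{φ_{ij} : (i,j) ∈ ν(G)}` of its Cholesky factor `K = φᵀφ`:
`J(K → φ) = 2^p ∏ i, φ_{ii}^{d_i^G + 1}` where `d_i^G = |bd_G(i) ∩ {i+1,...,p}|`.
Here `comp` is the completion operator: given the free elements `f`, `comp f` is the
upper-triangular matrix agreeing with `f` on `ν(G)` whose non-free entries satisfy the
completion equations with respect to `G`; `Φ` maps the free elements of `φ` to the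
corresponding entries of `K = φᵀφ` indexed by `ν(G)`. -/
theorem stmt10 (p : ℕ) (E : Fin p → Fin p → Prop) [DecidableRel E]
    (hEsym : ∀ i j, E i j → E j i) (hEirr : ∀ i, ¬ E i i)
    (comp : ({e // e ∈ nuG p E} → ℝ) → Matrix (Fin p) (Fin p) ℝ)
    (hcompUT : ∀ f, ∀ i j : Fin p, j < i → comp f i j = 0)
    (hcompFree : ∀ (f : {e // e ∈ nuG p E} → ℝ) (e : {e // e ∈ nuG p E}),
      comp f e.1.1 e.1.2 = f e)
    (hcompCompl : ∀ (f : {e // e ∈ nuG p E} → ℝ) (i j : Fin p), i < j → ¬ E i j →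
      comp f i j = -(1 / comp f i i) * ∑ k ∈ Finset.univ.filter (· < i),
        comp f k i * comp f k j) :
    ∀ f : {e // e ∈ nuG p E} → ℝ, (∀ i, 0 < comp f i i) →
      LinearMap.det
        (fderiv ℝ
          (fun g : {e // e ∈ nuG p E} → ℝ =>
            fun e : {e // e ∈ nuG p E} => ((comp g)ᵀ * comp g) e.1.1 e.1.2) f).toLinearMap
        = 2 ^ p * ∏ i : Fin p,
            comp f i i ^ ((Finset.univ.filter (fun j => i < j ∧ E i j)).card + 1) := by
  classical
  intro f hpos
  have hdm : ∀ i : Fin p, ((i, i) : Fin p × Fin p) ∈ nuG p E := by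
    intro i; simp [nuG]
  have hfpos : ∀ i : Fin p, 0 < f ⟨(i, i), hdm i⟩ := by
    intro i
    have h := hpos i
    have h2 : comp f i i = f ⟨(i, i), hdm i⟩ := hcompFree f ⟨(i, i), hdm i⟩
    rwa [h2] at h
  have hmemle : ∀ q ∈ nuG p E, q.1 ≤ q.2 := by
    intro q hq
    simp only [nuG, Finset.mem_filter, Finset.mem_univ, true_and] at hq
    rcases hq with h | h
    · exact le_of_eq h
    · exact le_of_lt h.1
  have harith : ∀ a b c d : ℕ, a < c → b < p → a * p + b < c * p + d := by
    intro a b c d h hb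
    calc a * p + b < a * p + p := by omega
      _ = (a + 1) * p := by ring
      _ ≤ c * p := Nat.mul_le_mul_right p h
      _ ≤ c * p + d := Nat.le_add_right _ _
  -- Key lemma: existence of derivatives of entries of `comp`, with triangular structure.
  have key : ∀ n : ℕ, ∀ i j : Fin p, i.1 * p + j.1 = n →
      ∃ L : ({e // e ∈ nuG p E} → ℝ) →L[ℝ] ℝ,
        HasFDerivAt (fun g => comp g i j) L f ∧
        (∀ e : {e // e ∈ nuG p E}, i.1 * p + j.1 < e.1.1.1 * p + e.1.2.1 →
          L (Pi.single e 1) = 0) ∧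
        (j < i → L = 0) ∧
        (∀ hm : ((i, j) : Fin p × Fin p) ∈ nuG p E,
          L = ContinuousLinearMap.proj (⟨(i, j), hm⟩ : {e // e ∈ nuG p E})) := by
    intro n
    induction n using Nat.strong_induction_on with
    | _ n ih =>
      intro i j hn
      subst hn
      by_cases hji : j < i
      · refine ⟨0, ?_, ?_, fun _ => rfl, ?_⟩
        · have hfun : (fun g => comp g i j) = fun _ : {e // e ∈ nuG p E} → ℝ => (0 : ℝ) :=
            funext fun g => hcompUT g i j hji
          rw [hfun]
          exact hasFDerivAt_const 0 f
        · intro e _; simp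
        · intro hm
          exact absurd (hmemle _ hm) (not_le.mpr hji)
      · by_cases hmem : ((i, j) : Fin p × Fin p) ∈ nuG p E
        · refine ⟨ContinuousLinearMap.proj (⟨(i, j), hmem⟩ : {e // e ∈ nuG p E}),
            ?_, ?_, ?_, ?_⟩
          · have hfun : (fun g => comp g i j)
                = fun g : {e // e ∈ nuG p E} → ℝ => g ⟨(i, j), hmem⟩ :=
              funext fun g => hcompFree g ⟨(i, j), hmem⟩
            rw [hfun]
            exact hasFDerivAt_apply _ f
          · intro e he
            have hne : (⟨(i, j), hmem⟩ : {e // e ∈ nuG p E}) ≠ e := by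
              intro h
              rw [← h] at he
              exact lt_irrefl _ he
            rw [ContinuousLinearMap.proj_apply]
            exact Pi.single_eq_of_ne hne 1
          · intro h; exact absurd h hji
          · intro hm; rfl
        · -- completion case : i < j, ¬ E i j
          have hij : i < j := by
            rcases lt_or_eq_of_le (not_lt.mp hji) with h | h
            · exact h
            · exact absurd (by simp [nuG, h] : ((i, j) : Fin p × Fin p) ∈ nuG p E) hmem
          have hEij : ¬ E i j := fun hE => hmem (by simp [nuG, hij, hE])
          have ih3 : ∀ a b : Fin p, ∃ L : ({e // e ∈ nuG p E} → ℝ) →L[ℝ] ℝ,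
              a.1 * p + b.1 < i.1 * p + j.1 →
              HasFDerivAt (fun g => comp g a b) L f ∧
                ∀ e : {e // e ∈ nuG p E}, a.1 * p + b.1 < e.1.1.1 * p + e.1.2.1 →
                  L (Pi.single e 1) = 0 := by
            intro a b
            by_cases h : a.1 * p + b.1 < i.1 * p + j.1
            · obtain ⟨L, h1, h2, _, _⟩ := ih _ h a b rfl
              exact ⟨L, fun _ => ⟨h1, h2⟩⟩
            · exact ⟨0, fun hc => absurd hc h⟩
          choose L hL using ih3
          set dI : {e // e ∈ nuG p E} := ⟨(i, i), hdm i⟩ with hdI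
          have hlt1 : ∀ k : Fin p, k < i → k.1 * p + i.1 < i.1 * p + j.1 :=
            fun k hk => harith _ _ _ _ hk i.2
          have hlt2 : ∀ k : Fin p, k < i → k.1 * p + j.1 < i.1 * p + j.1 :=
            fun k hk => harith _ _ _ _ hk j.2
          have hS : HasFDerivAt
              (fun g => ∑ k ∈ Finset.univ.filter (· < i), comp g k i * comp g k j)
              (∑ k ∈ Finset.univ.filter (· < i),
                (comp f k i • L k j + comp f k j • L k i)) f := by
            apply HasFDerivAt.fun_sum
            intro k hk
            have hk' : k < i := by simpa using hk
            exact ((hL k i (hlt1 k hk')).1).mul ((hL k j (hlt2 k hk')).1)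
          have hfne : f dI ≠ 0 := ne_of_gt (hfpos i)
          have hInv : HasFDerivAt (fun g : {e // e ∈ nuG p E} → ℝ => (g dI)⁻¹)
              ((ContinuousLinearMap.smulRight (1 : ℝ →L[ℝ] ℝ) (-(f dI ^ 2)⁻¹)).comp
                (ContinuousLinearMap.proj dI)) f :=
            (hasFDerivAt_inv hfne).comp f (hasFDerivAt_apply dI f)
          set Linv : ({e // e ∈ nuG p E} → ℝ) →L[ℝ] ℝ :=
            (ContinuousLinearMap.smulRight (1 : ℝ →L[ℝ] ℝ) (-(f dI ^ 2)⁻¹)).comp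
              (ContinuousLinearMap.proj dI) with hLinv
          set LS : ({e // e ∈ nuG p E} → ℝ) →L[ℝ] ℝ :=
            ∑ k ∈ Finset.univ.filter (· < i),
              (comp f k i • L k j + comp f k j • L k i) with hLS
          set S : ℝ := ∑ k ∈ Finset.univ.filter (· < i), comp f k i * comp f k j with hSdef
          refine ⟨(-(f dI)⁻¹) • LS + S • (-Linv), ?_, ?_, ?_, ?_⟩
          · have hfun : (fun g => comp g i j) =
                fun g : {e // e ∈ nuG p E} → ℝ =>
                  -(g dI)⁻¹ * ∑ k ∈ Finset.univ.filter (· < i), comp g k i * comp g k j := by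
              funext g
              have h2 : comp g i i = g dI := hcompFree g dI
              rw [hcompCompl g i j hij hEij, h2, one_div]
            rw [hfun]
            exact hInv.neg.mul hS
          · intro e he
            have hijn : (i : ℕ) < j := hij
            have hedI : dI ≠ e := by
              intro h
              rw [← h] at he
              simp only [hdI] at he
              omega
            have hterm : ∀ k ∈ Finset.univ.filter (· < i),
                (comp f k i • L k j + comp f k j • L k i) (Pi.single e 1) = 0 := by
              intro k hk
              have hk' : k < i := by simpa using hk
              have z1 := ((hL k j (hlt2 k hk')).2) e (lt_trans (hlt2 k hk') he)
              have z2 := ((hL k i (hlt1 k hk')).2) e (lt_trans (hlt1 k hk') he)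
              simp [z1, z2]
            have hLSe : LS (Pi.single e 1) = 0 := by
              rw [hLS, ContinuousLinearMap.sum_apply]
              exact Finset.sum_eq_zero hterm
            have hLinve : Linv (Pi.single e 1) = 0 := by
              rw [hLinv]
              simp [Pi.single_eq_of_ne hedI]
            simp [hLSe, hLinve]
          · intro h; exact absurd h hji
          · intro hm; exact absurd hm hmem
  have key' : ∀ a b : Fin p, ∃ L : ({e // e ∈ nuG p E} → ℝ) →L[ℝ] ℝ,
      HasFDerivAt (fun g => comp g a b) L f ∧
      (∀ e : {e // e ∈ nuG p E}, a.1 * p + b.1 < e.1.1.1 * p + e.1.2.1 →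
        L (Pi.single e 1) = 0) ∧
      (b < a → L = 0) ∧
      (∀ hm : ((a, b) : Fin p × Fin p) ∈ nuG p E,
        L = ContinuousLinearMap.proj (⟨(a, b), hm⟩ : {e // e ∈ nuG p E})) :=
    fun a b => key _ a b rfl
  choose L hLd hL0 hLlow hLfree using key'
  set Me : {e // e ∈ nuG p E} → ({e // e ∈ nuG p E} → ℝ) →L[ℝ] ℝ :=
    fun e => ∑ k : Fin p, (comp f k e.1.1 • L k e.1.2 + comp f k e.1.2 • L k e.1.1) with hMe
  have hcoord : ∀ e : {e // e ∈ nuG p E},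
      HasFDerivAt (fun g => ((comp g)ᵀ * comp g) e.1.1 e.1.2) (Me e) f := by
    intro e
    have hfun : (fun g => ((comp g)ᵀ * comp g) e.1.1 e.1.2)
        = fun g => ∑ k : Fin p, comp g k e.1.1 * comp g k e.1.2 := by
      funext g
      rw [Matrix.mul_apply]
      simp [Matrix.transpose_apply]
    rw [hfun, hMe]
    exact HasFDerivAt.fun_sum fun k _ => (hLd k e.1.1).mul (hLd k e.1.2)
  have hPhi : HasFDerivAt
      (fun g : {e // e ∈ nuG p E} → ℝ =>
        fun e : {e // e ∈ nuG p E} => ((comp g)ᵀ * comp g) e.1.1 e.1.2)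
      (ContinuousLinearMap.pi Me) f := hasFDerivAt_pi.2 hcoord
  rw [hPhi.fderiv]
  have hinj : Function.Injective
      (fun e : {e // e ∈ nuG p E} => e.1.1.1 * p + e.1.2.1) := by
    intro e e' h
    have h' : e.1.1.1 * p + e.1.2.1 = e'.1.1.1 * p + e'.1.2.1 := h
    have h1 : e.1.2.1 < p := e.1.2.2
    have h2 : e'.1.2.1 < p := e'.1.2.2
    rcases lt_trichotomy e.1.1.1 e'.1.1.1 with hlt | heq | hgt
    · exact absurd h' (ne_of_lt (harith _ _ _ _ hlt h1))
    · have hb : e.1.2.1 = e'.1.2.1 := by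
        rw [heq] at h'
        exact Nat.add_left_cancel h'
      exact Subtype.ext (Prod.ext (Fin.ext heq) (Fin.ext hb))
    · exact absurd h'.symm (ne_of_lt (harith _ _ _ _ hgt h2))
  rw [← LinearMap.det_toMatrix (Pi.basisFun ℝ {e // e ∈ nuG p E})]
  set M : Matrix {e // e ∈ nuG p E} {e // e ∈ nuG p E} ℝ :=
    LinearMap.toMatrix (Pi.basisFun ℝ _) (Pi.basisFun ℝ _)
      (ContinuousLinearMap.pi Me).toLinearMap with hM
  have hMapp : ∀ e e' : {e // e ∈ nuG p E}, M e e' = Me e (Pi.single e' 1) := by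
    intro e e'
    rw [hM, LinearMap.toMatrix_apply]
    simp [Pi.basisFun_apply, Pi.basisFun_repr, ContinuousLinearMap.pi_apply]
  -- triangularity
  have htri : Mᵀ.BlockTriangular
      (fun e : {e // e ∈ nuG p E} => e.1.1.1 * p + e.1.2.1) := by
    intro e' e hlt
    have hidx : e.1.1.1 * p + e.1.2.1 < e'.1.1.1 * p + e'.1.2.1 := hlt
    rw [Matrix.transpose_apply, hMapp, hMe, ContinuousLinearMap.sum_apply]
    apply Finset.sum_eq_zero
    intro k _
    have hab : e.1.1 ≤ e.1.2 := hmemle _ e.2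
    have habn : e.1.1.1 ≤ e.1.2.1 := hab
    by_cases hk : k ≤ e.1.1
    · have hkn : k.1 * p ≤ e.1.1.1 * p := Nat.mul_le_mul_right p hk
      have z1 : L k e.1.1 (Pi.single e' 1) = 0 := by
        apply hL0
        have : k.1 * p + e.1.1.1 ≤ e.1.1.1 * p + e.1.2.1 := by linarith
        linarith
      have z2 : L k e.1.2 (Pi.single e' 1) = 0 := by
        apply hL0
        have : k.1 * p + e.1.2.1 ≤ e.1.1.1 * p + e.1.2.1 := by linarith
        linarith
      simp [z1, z2]
    · have hk' : e.1.1 < k := not_le.mp hk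
      have z1 : comp f k e.1.1 = 0 := hcompUT f k e.1.1 hk'
      have z2 : L k e.1.1 = 0 := hLlow k e.1.1 hk'
      simp [z1, z2]
  have hdetM : M.det = ∏ e : {e // e ∈ nuG p E}, M e e := by
    rw [← Matrix.det_transpose M, htri.det]
    rw [Finset.prod_image (fun x _ y _ h => hinj h)]
    apply Finset.prod_congr rfl
    intro e _
    letI : Unique {e' : {e // e ∈ nuG p E} //
        (fun e : {e // e ∈ nuG p E} => e.1.1.1 * p + e.1.2.1) e'
          = e.1.1.1 * p + e.1.2.1} :=
      ⟨⟨⟨e, rfl⟩⟩, fun a => Subtype.ext (hinj a.2)⟩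
    rw [Matrix.det_unique]
    simp only [Matrix.toSquareBlock_def, Matrix.transpose_apply]
    rfl
  rw [hdetM]
  -- diagonal entries
  have hdiagval : ∀ e : {e // e ∈ nuG p E},
      M e e = (fun q : Fin p × Fin p =>
        if q.1 = q.2 then 2 * comp f q.1 q.1 else comp f q.1 q.1) e.1 := by
    intro e
    have hab : e.1.1 ≤ e.1.2 := hmemle _ e.2
    rw [hMapp, hMe, ContinuousLinearMap.sum_apply]
    rw [Finset.sum_eq_single e.1.1]
    · -- main term
      have hm1 : ((e.1.1, e.1.2) : Fin p × Fin p) ∈ nuG p E := e.2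
      have hfree1 : L e.1.1 e.1.2 = ContinuousLinearMap.proj e := by
        have h := hLfree e.1.1 e.1.2 hm1
        have he : (⟨(e.1.1, e.1.2), hm1⟩ : {e // e ∈ nuG p E}) = e := rfl
        rw [h, he]
      have hfree2 : L e.1.1 e.1.1 =
          ContinuousLinearMap.proj (⟨(e.1.1, e.1.1), hdm e.1.1⟩ : {e // e ∈ nuG p E}) :=
        hLfree e.1.1 e.1.1 (hdm e.1.1)
      rw [hfree1, hfree2]
      by_cases hd : e.1.1 = e.1.2
      · have heq : (⟨(e.1.1, e.1.1), hdm e.1.1⟩ : {e // e ∈ nuG p E}) = e :=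
          Subtype.ext (Prod.ext rfl hd)
        simp only [ContinuousLinearMap.add_apply, ContinuousLinearMap.smul_apply,
          ContinuousLinearMap.proj_apply, heq, Pi.single_eq_same, if_pos hd, smul_eq_mul]
        have : comp f e.1.1 e.1.2 = comp f e.1.1 e.1.1 := by rw [← hd]
        rw [this]
        ring
      · have hne : (⟨(e.1.1, e.1.1), hdm e.1.1⟩ : {e // e ∈ nuG p E}) ≠ e := by
          intro h
          exact hd (congrArg (fun x : {e // e ∈ nuG p E} => x.1.2) h)
        simp only [ContinuousLinearMap.add_apply, ContinuousLinearMap.smul_apply,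
          ContinuousLinearMap.proj_apply, Pi.single_eq_same, Pi.single_eq_of_ne hne,
          if_neg hd]
        simp
    · intro k _ hkne
      rcases lt_or_gt_of_ne hkne with hklt | hkgt
      · have z1 : L k e.1.2 (Pi.single e 1) = 0 := by
          apply hL0
          exact harith _ _ _ _ hklt e.1.2.2
        have z2 : L k e.1.1 (Pi.single e 1) = 0 := by
          apply hL0
          exact harith _ _ _ _ hklt e.1.1.2
        simp [z1, z2]
      · have z1 : comp f k e.1.1 = 0 := hcompUT f k e.1.1 hkgt
        have z2 : L k e.1.1 = 0 := hLlow k e.1.1 hkgt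
        simp [z1, z2]
    · intro h
      exact absurd (Finset.mem_univ e.1.1) h
  -- compute the product over the diagonal
  have hprod1 : ∏ e : {e // e ∈ nuG p E}, M e e
      = ∏ q ∈ nuG p E,
          (if q.1 = q.2 then 2 * comp f q.1 q.1 else comp f q.1 q.1) := by
    rw [Finset.prod_congr rfl fun e _ => hdiagval e]
    exact (Finset.prod_subtype (nuG p E) (fun x => Iff.rfl)
      (fun q : Fin p × Fin p =>
        if q.1 = q.2 then 2 * comp f q.1 q.1 else comp f q.1 q.1)).symm
  rw [hprod1]
  rw [← Finset.prod_filter_mul_prod_filter_not (nuG p E) (fun q => q.1 = q.2)]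
  have hdiagprod : ∏ q ∈ (nuG p E).filter (fun q => q.1 = q.2),
      (if q.1 = q.2 then 2 * comp f q.1 q.1 else comp f q.1 q.1)
      = ∏ i : Fin p, (2 * comp f i i) := by
    refine Finset.prod_bij' (fun q _ => q.1) (fun i _ => (i, i)) ?_ ?_ ?_ ?_ ?_
    · intro a _; exact Finset.mem_univ _
    · intro a _
      simp [nuG]
    · intro a ha
      simp only [Finset.mem_filter] at ha
      exact Prod.ext rfl ha.2
    · intro a _; rfl
    · intro a ha
      simp only [Finset.mem_filter] at ha
      rw [if_pos ha.2]
  have hedgeset : (nuG p E).filter (fun q => ¬ q.1 = q.2)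
      = Finset.univ.filter (fun q : Fin p × Fin p => q.1 < q.2 ∧ E q.1 q.2) := by
    ext q
    simp only [nuG, Finset.filter_filter, Finset.mem_filter, Finset.mem_univ, true_and]
    constructor
    · rintro ⟨h | h, hne⟩
      · exact absurd h hne
      · exact h
    · intro h
      exact ⟨Or.inr h, ne_of_lt h.1⟩
  have hedgeprod : ∏ q ∈ (nuG p E).filter (fun q => ¬ q.1 = q.2),
      (if q.1 = q.2 then 2 * comp f q.1 q.1 else comp f q.1 q.1)
      = ∏ i : Fin p, comp f i i ^ (Finset.univ.filter (fun j => i < j ∧ E i j)).card := by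
    rw [hedgeset]
    have hstep : ∏ q ∈ Finset.univ.filter (fun q : Fin p × Fin p => q.1 < q.2 ∧ E q.1 q.2),
        (if q.1 = q.2 then 2 * comp f q.1 q.1 else comp f q.1 q.1)
        = ∏ q ∈ Finset.univ.filter (fun q : Fin p × Fin p => q.1 < q.2 ∧ E q.1 q.2),
          comp f q.1 q.1 := by
      apply Finset.prod_congr rfl
      intro q hq
      simp only [Finset.mem_filter] at hq
      rw [if_neg (ne_of_lt hq.2.1)]
    rw [hstep]
    rw [← Finset.prod_fiberwise_of_maps_to
      (g := fun q : Fin p × Fin p => q.1)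
      (t := (Finset.univ : Finset (Fin p))) (fun q _ => Finset.mem_univ _)
      (fun q => comp f q.1 q.1)]
    apply Finset.prod_congr rfl
    intro i _
    have hconst : ∀ q ∈ (Finset.univ.filter
          (fun q : Fin p × Fin p => q.1 < q.2 ∧ E q.1 q.2)).filter
          (fun q => q.1 = i), comp f q.1 q.1 = comp f i i := by
      intro q hq
      simp only [Finset.mem_filter] at hq
      rw [hq.2]
    rw [Finset.prod_congr rfl hconst, Finset.prod_const]
    congr 1
    refine Finset.card_bij' (fun q _ => q.2) (fun j _ => (i, j)) ?_ ?_ ?_ ?_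
    · intro q hq
      simp only [Finset.mem_filter, Finset.mem_univ, true_and] at hq ⊢
      rcases hq with ⟨⟨h1, h2⟩, h3⟩
      subst h3
      exact ⟨h1, h2⟩
    · intro j hj
      simp only [Finset.mem_filter, Finset.mem_univ, true_and] at hj ⊢
      exact ⟨hj, trivial⟩
    · intro q hq
      simp only [Finset.mem_filter] at hq
      exact Prod.ext hq.2.symm rfl
    · intro j _; rfl
  rw [hdiagprod, hedgeprod]
  rw [Finset.prod_mul_distrib, Finset.prod_const]
  simp only [Finset.card_univ, Fintype.card_fin]
  rw [mul_assoc, ← Finset.prod_mul_distrib]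
  congr 1
  apply Finset.prod_congr rfl
  intro i _
  rw [pow_succ]
  ring
end
end

section
/- Let X̃ be an m_l × m_{-l} matrix following a matrix-variate normal distribution with mean μ 1ᵀ_{m_{-l}} (μ ∈ ℝ^{m_l}), row precision K_l and column precision K_{-l} (i.e., vec(X̃) ~ N(vec(μ1ᵀ), (K_{-l} ⊗ K_l)^{-1})), and let μ have prior N(μ⁰, Ω^{-1}) scaled so the prior precision is m_{-l}Ω. Then the posterior of μ given X̃ is N(m_μ, K_μ^{-1}) with K_μ = (1ᵀ K_{-l} 1) K_l + m_{-l}Ω and m_μ = K_μ^{-1}[K_l X̃ K_{-l} 1 + m_{-l} Ω μ⁰], where 1 = 1_{m_{-l}}. -/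
open Matrix Real

noncomputable section

/-- Multivariate normal density parametrized by its precision matrix `P`, with mean `μ`. -/
def mvnDensityPrec (d : ℕ) (μ : Fin d → ℝ) (P : Matrix (Fin d) (Fin d) ℝ)
    (x : Fin d → ℝ) : ℝ :=
  (2 * π) ^ (-(d : ℝ) / 2) * Real.sqrt P.det *
    Real.exp (-((x - μ) ⬝ᵥ (P *ᵥ (x - μ))) / 2)

/-- Matrix-variate normal density on `ml × mo` matrices with mean `M`, row precision `Kl`
and column precision `Km`, i.e. `vec(X) ~ N(vec(M), (Km ⊗ Kl)⁻¹)`. -/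
def matNormDensityPrec (ml mo : ℕ) (M : Matrix (Fin ml) (Fin mo) ℝ)
    (Km : Matrix (Fin mo) (Fin mo) ℝ) (Kl : Matrix (Fin ml) (Fin ml) ℝ)
    (X : Matrix (Fin ml) (Fin mo) ℝ) : ℝ :=
  (2 * π) ^ (-(ml * mo : ℝ) / 2) * Kl.det ^ ((mo : ℝ) / 2) * Km.det ^ ((ml : ℝ) / 2) *
    Real.exp (-(Km * (X - M)ᵀ * Kl * (X - M)).trace / 2)

lemma smul_posDef {n : ℕ} {M : Matrix (Fin n) (Fin n) ℝ} (hM : M.PosDef) {c : ℝ} (hc : 0 < c) :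
    (c • M).PosDef := by
  refine ⟨?_, fun x hx => ?_⟩
  · show (c • M)ᴴ = c • M
    rw [conjTranspose_smul, hM.1.eq]
    simp
  · exact (hM.smul hc).2 hx

lemma herm_real {n : ℕ} {A : Matrix (Fin n) (Fin n) ℝ} (h : A.IsHermitian) : Aᵀ = A := by
  ext i j
  simpa using congrFun (congrFun h.eq i) j

lemma trace_mul_vecMulVec {n p : ℕ} (C : Matrix (Fin p) (Fin n) ℝ) (a : Fin n → ℝ)
    (b : Fin p → ℝ) : (C * vecMulVec a b).trace = b ⬝ᵥ (C *ᵥ a) := by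
  simp only [Matrix.trace, Matrix.diag, Matrix.mul_apply, vecMulVec_apply, dotProduct, mulVec,
    Finset.mul_sum]
  refine Finset.sum_congr rfl fun j _ => Finset.sum_congr rfl fun i _ => by ring

lemma vecMulVec_mulVec' {n p : ℕ} (a : Fin n → ℝ) (b : Fin p → ℝ) (v : Fin p → ℝ) :
    vecMulVec a b *ᵥ v = (b ⬝ᵥ v) • a := by
  funext i
  simp only [mulVec, dotProduct, vecMulVec_apply, Pi.smul_apply, smul_eq_mul, Finset.sum_mul]
  refine Finset.sum_congr rfl fun j _ => by ring

lemma vecMulVec_transpose' {n p : ℕ} (a : Fin n → ℝ) (b : Fin p → ℝ) :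
    (vecMulVec a b)ᵀ = vecMulVec b a := by
  ext i j; simp [vecMulVec_apply, mul_comm]

lemma symm_dot {n : ℕ} {A : Matrix (Fin n) (Fin n) ℝ} (hA : Aᵀ = A) (x y : Fin n → ℝ) :
    x ⬝ᵥ (A *ᵥ y) = y ⬝ᵥ (A *ᵥ x) := by
  rw [dotProduct_mulVec, ← hA, vecMul_transpose, dotProduct_comm, hA]

lemma dot_mulVec_swap {n p : ℕ} (C : Matrix (Fin p) (Fin n) ℝ) (x : Fin p → ℝ) (y : Fin n → ℝ) :
    x ⬝ᵥ (C *ᵥ y) = y ⬝ᵥ (Cᵀ *ᵥ x) := by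
  rw [dotProduct_mulVec, ← mulVec_transpose, dotProduct_comm]

/-- Gibbs update for the dimension-`l` mean vector in a multi-way GGM with separable means:
if `X̃` is matrix-variate normal with mean `μ 1ᵀ`, row precision `Kl`, column precision
`Km` (`= K_{-l}`, of size `m_{-l} = mo`), and `μ` has prior with mean `μ⁰` and precision
`mo • Ω`, then the posterior of `μ` given `X̃` is `N(m_μ, K_μ⁻¹)` with
`K_μ = (1ᵀ Km 1) Kl + mo Ω` and `m_μ = K_μ⁻¹ [Kl X̃ Km 1 + mo Ω μ⁰]`. -/
theorem stmt17 (ml mo : ℕ)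
    (Kl Om : Matrix (Fin ml) (Fin ml) ℝ) (Km : Matrix (Fin mo) (Fin mo) ℝ)
    (hKl : Kl.PosDef) (hKm : Km.PosDef) (hOm : Om.PosDef)
    (X : Matrix (Fin ml) (Fin mo) ℝ) (μ0 : Fin ml → ℝ) :
    ∃ c : ℝ, 0 < c ∧
      ∀ μ : Fin ml → ℝ,
        mvnDensityPrec ml μ0 ((mo : ℝ) • Om) μ *
            matNormDensityPrec ml mo (Matrix.vecMulVec μ (fun _ => 1)) Km Kl X
          = c *
            mvnDensityPrec ml
              ((((fun _ => 1) ⬝ᵥ (Km *ᵥ (fun _ => 1))) • Kl + (mo : ℝ) • Om)⁻¹ *ᵥ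
                (Kl *ᵥ (X *ᵥ (Km *ᵥ (fun _ => 1))) + (mo : ℝ) • (Om *ᵥ μ0)))
              (((fun _ => 1) ⬝ᵥ (Km *ᵥ (fun _ => 1))) • Kl + (mo : ℝ) • Om) μ := by
  rcases Nat.eq_zero_or_pos mo with hmo | hmo
  · subst hmo
    refine ⟨1, one_pos, fun μ => ?_⟩
    have h0 : ((fun _ => (1:ℝ)) ⬝ᵥ (Km *ᵥ fun _ => (1:ℝ))) = 0 := by
      simp [dotProduct]
    rcases Nat.eq_zero_or_pos ml with hml | hml
    · subst hml
      simp [mvnDensityPrec, matNormDensityPrec, dotProduct, Matrix.trace, Real.rpow_zero]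
    · haveI : Nonempty (Fin ml) := ⟨⟨0, hml⟩⟩
      have hd : (0 : Matrix (Fin ml) (Fin ml) ℝ).det = 0 := Matrix.det_zero
      simp [mvnDensityPrec, h0, hd]
  · -- main case
    have honez : (fun _ => (1:ℝ)) ≠ (0 : Fin mo → ℝ) := by
      intro h
      exact one_ne_zero (congrFun h ⟨0, hmo⟩)
    set one1 : Fin mo → ℝ := fun _ => 1 with hone1
    set s : ℝ := one1 ⬝ᵥ (Km *ᵥ one1) with hs_def
    set K : Matrix (Fin ml) (Fin ml) ℝ := s • Kl + (mo : ℝ) • Om with hK_def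
    set b1 : Fin ml → ℝ := Kl *ᵥ (X *ᵥ (Km *ᵥ one1)) with hb1
    set b : Fin ml → ℝ := b1 + (mo : ℝ) • (Om *ᵥ μ0) with hb
    set m : Fin ml → ℝ := K⁻¹ *ᵥ b with hm
    have hmoR : (0:ℝ) < (mo : ℝ) := by exact_mod_cast hmo
    have hs : 0 < s := by
      have := hKm.dotProduct_mulVec_pos honez
      simpa [hs_def] using this
    have hK : K.PosDef := (smul_posDef hKl hs).add (smul_posDef hOm hmoR)
    have hKdet : (0:ℝ) < K.det := hK.det_pos
    have hPdet : (0:ℝ) < ((mo:ℝ) • Om).det := (smul_posDef hOm hmoR).det_pos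
    have hKsym : Kᵀ = K := herm_real hK.1
    have hOmsym : Omᵀ = Om := herm_real hOm.1
    have hKlsym : Klᵀ = Kl := herm_real hKl.1
    have hKmsym : Kmᵀ = Km := herm_real hKm.1
    have hKb : K *ᵥ m = b := by
      rw [hm, mulVec_mulVec, Matrix.mul_nonsing_inv _ (isUnit_iff_ne_zero.mpr hKdet.ne'),
        one_mulVec]
    -- common vector identity
    have hv : ∀ w : Fin ml → ℝ, one1 ⬝ᵥ (Km *ᵥ (Xᵀ *ᵥ (Kl *ᵥ w))) = w ⬝ᵥ b1 := by
      intro w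
      rw [symm_dot hKmsym one1, dotProduct_comm, dot_mulVec_swap, transpose_transpose,
        dotProduct_comm, symm_dot hKlsym, hb1, mulVec_mulVec, mulVec_mulVec]
    have expand : ∀ μ : Fin ml → ℝ,
        (μ - μ0) ⬝ᵥ (((mo:ℝ) • Om) *ᵥ (μ - μ0)) +
          (Km * (X - vecMulVec μ one1)ᵀ * Kl * (X - vecMulVec μ one1)).trace
        = μ ⬝ᵥ (K *ᵥ μ) - 2 * (μ ⬝ᵥ b) +
            ((mo:ℝ) * (μ0 ⬝ᵥ (Om *ᵥ μ0)) + (Km * Xᵀ * Kl * X).trace) := by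
      intro μ
      have hQ1 : (μ - μ0) ⬝ᵥ (((mo:ℝ) • Om) *ᵥ (μ - μ0)) =
          (mo:ℝ) * (μ ⬝ᵥ (Om *ᵥ μ)) - 2 * ((mo:ℝ) * (μ ⬝ᵥ (Om *ᵥ μ0)))
            + (mo:ℝ) * (μ0 ⬝ᵥ (Om *ᵥ μ0)) := by
        rw [smul_mulVec, dotProduct_smul, smul_eq_mul, mulVec_sub, dotProduct_sub,
          sub_dotProduct, sub_dotProduct, symm_dot hOmsym μ0 μ]
        ring
      have e1 : (Km * Xᵀ * Kl * vecMulVec μ one1).trace = μ ⬝ᵥ b1 := by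
        rw [trace_mul_vecMulVec, ← mulVec_mulVec, ← mulVec_mulVec, hv μ]
      have e3 : (Km * (vecMulVec μ one1)ᵀ * Kl * vecMulVec μ one1).trace
          = s * (μ ⬝ᵥ (Kl *ᵥ μ)) := by
        rw [trace_mul_vecMulVec, ← mulVec_mulVec, ← mulVec_mulVec, vecMulVec_transpose',
          vecMulVec_mulVec', mulVec_smul, dotProduct_smul, smul_eq_mul, hs_def]
        ring
      have e2 : (Km * (vecMulVec μ one1)ᵀ * Kl * X).trace = μ ⬝ᵥ b1 := by
        rw [vecMulVec_transpose', Matrix.trace_mul_comm, ← Matrix.mul_assoc,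
          ← Matrix.mul_assoc, Matrix.trace_mul_comm, ← Matrix.mul_assoc, ← Matrix.mul_assoc,
          trace_mul_vecMulVec, hb1, mulVec_mulVec, mulVec_mulVec]
      have hmat : Km * (X - vecMulVec μ one1)ᵀ * Kl * (X - vecMulVec μ one1)
          = Km * Xᵀ * Kl * X - Km * Xᵀ * Kl * vecMulVec μ one1
            - (Km * (vecMulVec μ one1)ᵀ * Kl * X
              - Km * (vecMulVec μ one1)ᵀ * Kl * vecMulVec μ one1) := by
        rw [transpose_sub, Matrix.mul_sub Km, Matrix.sub_mul, Matrix.sub_mul,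
          Matrix.mul_sub, Matrix.mul_sub]
      rw [hmat, trace_sub, trace_sub, trace_sub, e1, e2, e3, hQ1, hK_def, add_mulVec,
        smul_mulVec, smul_mulVec, dotProduct_add, dotProduct_smul,
        dotProduct_smul, smul_eq_mul, smul_eq_mul, hb, dotProduct_add, dotProduct_smul,
        smul_eq_mul]
      ring
    set Cc : ℝ := (mo:ℝ) * (μ0 ⬝ᵥ (Om *ᵥ μ0)) + (Km * Xᵀ * Kl * X).trace - m ⬝ᵥ b with hCc
    have key : ∀ μ : Fin ml → ℝ,
        (μ - μ0) ⬝ᵥ (((mo:ℝ) • Om) *ᵥ (μ - μ0)) +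
          (Km * (X - vecMulVec μ one1)ᵀ * Kl * (X - vecMulVec μ one1)).trace
        = (μ - m) ⬝ᵥ (K *ᵥ (μ - m)) + Cc := by
      intro μ
      have h2 : (μ - m) ⬝ᵥ (K *ᵥ (μ - m))
          = μ ⬝ᵥ (K *ᵥ μ) - 2 * (μ ⬝ᵥ b) + m ⬝ᵥ b := by
        rw [mulVec_sub, hKb, dotProduct_sub, sub_dotProduct, sub_dotProduct,
          symm_dot hKsym m μ, hKb]
        ring
      rw [expand μ, h2, hCc]
      ring
    refine ⟨(2 * π) ^ (-(ml * mo : ℝ) / 2) * Kl.det ^ ((mo : ℝ) / 2) * Km.det ^ ((ml : ℝ) / 2)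
        * Real.sqrt (((mo:ℝ) • Om).det) * Real.exp (-Cc / 2) / Real.sqrt K.det, ?_, ?_⟩
    · refine div_pos ?_ (Real.sqrt_pos.mpr hKdet)
      have hpi : (0:ℝ) < 2 * π := by positivity
      exact mul_pos (mul_pos (mul_pos (mul_pos (Real.rpow_pos_of_pos hpi _)
        (Real.rpow_pos_of_pos hKl.det_pos _)) (Real.rpow_pos_of_pos hKm.det_pos _))
        (Real.sqrt_pos.mpr hPdet)) (Real.exp_pos _)
    · intro μ
      have hexp : Real.exp (-((μ - μ0) ⬝ᵥ (((mo:ℝ) • Om) *ᵥ (μ - μ0))) / 2) *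
          Real.exp (-(Km * (X - vecMulVec μ one1)ᵀ * Kl * (X - vecMulVec μ one1)).trace / 2)
          = Real.exp (-((μ - m) ⬝ᵥ (K *ᵥ (μ - m))) / 2) * Real.exp (-Cc / 2) := by
        rw [← Real.exp_add, ← Real.exp_add]
        congr 1
        have := key μ
        linarith
      simp only [mvnDensityPrec, matNormDensityPrec]
      have hsK : Real.sqrt K.det ≠ 0 := ne_of_gt (Real.sqrt_pos.mpr hKdet)
      rw [div_mul_eq_mul_div, eq_div_iff hsK]
      linear_combination ((2 * π) ^ (-(ml : ℝ) / 2) * (2 * π) ^ (-(ml * mo : ℝ) / 2)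
        * Kl.det ^ ((mo : ℝ) / 2) * Km.det ^ ((ml : ℝ) / 2) * Real.sqrt (((mo:ℝ) • Om).det)
        * Real.sqrt K.det) * hexp
end
end
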